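/- Let P be a convex polygon in ℝ² with vertex set V, and let S_1,…,S_m be contractive affine maps forming a simply connected self-affine P-polygonal system with attractor K. For finite multiindices 𝐢 and 𝐣, write P_𝐢 = S_𝐢(P) and K_𝐢 = S_𝐢(K). Then P_𝐢 ⊂ P_𝐣 if and only if K_𝐢 ⊂ K_𝐣. -/

import Mathlib

open Set

noncomputable section AuxPolygonal

private abbrev E2' := EuclideanSpace ℝ (Fin 2)

/-- Nested intersection of compact preconnected sets is preconnected. -/
private lemma aux_iInter_preconn {X : Type*} [TopologicalSpace X] [T2Space X]
    {U : ℕ → Set X} (hc : ∀ n, IsCompact (U n)) (hd : ∀ n, U (n + 1) ⊆ U n)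
    (hp : ∀ n, IsPreconnected (U n)) : IsPreconnected (⋂ n, U n) := by
  set C := ⋂ n, U n with hC
  have hCsub : ∀ n, C ⊆ U n := fun n => iInter_subset _ n
  have hCclosed : IsClosed C := isClosed_iInter fun n => (hc n).isClosed
  have hCcomp : IsCompact C := (hc 0).of_isClosed_subset hCclosed (hCsub 0)
  rw [isPreconnected_iff_subset_of_fully_disjoint_closed hCclosed]
  intro u v hu hv hsub hdisj
  have hA : IsCompact (C ∩ u) := hCcomp.inter_right hu
  have hB : IsCompact (C ∩ v) := hCcomp.inter_right hv
  obtain ⟨u', v', hu', hv', hAu', hBv', huv'⟩ :=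
    SeparatedNhds.of_isCompact_isCompact hA hB
      (hdisj.mono inter_subset_right inter_subset_right)
  have hCuv' : C ⊆ u' ∪ v' := by
    intro x hx
    rcases hsub hx with h | h
    · exact Or.inl (hAu' ⟨hx, h⟩)
    · exact Or.inr (hBv' ⟨hx, h⟩)
  have hexn : ∃ n, U n ⊆ u' ∪ v' := by
    by_contra h
    push_neg at h
    have hne : ∀ n, (U n ∩ (u' ∪ v')ᶜ).Nonempty := by
      intro n
      obtain ⟨x, hx, hx'⟩ := not_subset.1 (h n)
      exact ⟨x, hx, hx'⟩
    have := IsCompact.nonempty_iInter_of_sequence_nonempty_isCompact_isClosed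
      (fun n => U n ∩ (u' ∪ v')ᶜ)
      (fun n => inter_subset_inter_left _ (hd n)) hne
      ((hc 0).inter_right (isClosed_compl_iff.2 (hu'.union hv')))
      (fun n => (hc n).isClosed.inter (isClosed_compl_iff.2 (hu'.union hv')))
    obtain ⟨x, hx⟩ := this
    have hxC : x ∈ C := mem_iInter.2 fun n => (mem_iInter.1 hx n).1
    exact (mem_iInter.1 hx 0).2 (hCuv' hxC)
  obtain ⟨n, hn⟩ := hexn
  have : U n ∩ u' = ∅ ∨ U n ∩ v' = ∅ := by
    by_contra h
    push_neg at h
    obtain ⟨x, hx⟩ := hp n u' v' hu' hv' hn h.1 h.2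
    exact (huv'.le_bot ⟨hx.2.1, hx.2.2⟩ : False)
  rcases this with h | h
  · right
    intro x hx
    rcases hsub hx with hxu | hxv
    · exact absurd (eq_empty_iff_forall_notMem.1 h x) (by
        exact fun hh => hh ⟨hCsub n hx, hAu' ⟨hx, hxu⟩⟩)
    · exact hxv
  · left
    intro x hx
    rcases hsub hx with hxu | hxv
    · exact hxu
    · exact absurd (eq_empty_iff_forall_notMem.1 h x) (by
        exact fun hh => hh ⟨hCsub n hx, hBv' ⟨hx, hxv⟩⟩)

/-- A finite family of compact nonempty sets with preconnected union is chain-connected. -/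
private lemma aux_rtg {X : Type*} [TopologicalSpace X] [T2Space X] {ι : Type*} [Finite ι]
    {s : ι → Set X} (hcomp : ∀ i, IsCompact (s i)) (hne : ∀ i, (s i).Nonempty)
    (hconn : IsPreconnected (⋃ i, s i)) (i j : ι) :
    Relation.ReflTransGen (fun a b => (s a ∩ s b).Nonempty) i j := by
  set R := fun a b : ι => (s a ∩ s b).Nonempty with hR
  set T := {k : ι | Relation.ReflTransGen R i k} with hT
  set A := ⋃ k ∈ T, s k with hA
  set B := ⋃ k ∈ Tᶜ, s k with hB
  have hAclosed : IsClosed A :=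
    Set.Finite.isClosed_biUnion (Set.toFinite T) fun k _ => (hcomp k).isClosed
  have hBclosed : IsClosed B :=
    Set.Finite.isClosed_biUnion (Set.toFinite Tᶜ) fun k _ => (hcomp k).isClosed
  have hdisj : Disjoint A B := by
    rw [Set.disjoint_left]
    rintro x hxA hxB
    simp only [hA, hB, mem_iUnion] at hxA hxB
    obtain ⟨k, hkT, hxk⟩ := hxA
    obtain ⟨l, hlT, hxl⟩ := hxB
    exact hlT (hkT.tail ⟨x, hxk, hxl⟩)
  have hcover : (⋃ k, s k) ⊆ A ∪ B := by
    intro x hx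
    obtain ⟨k, hk⟩ := mem_iUnion.1 hx
    by_cases h : k ∈ T
    · exact Or.inl (mem_biUnion h hk)
    · exact Or.inr (mem_biUnion h hk)
  have hUclosed : IsClosed (⋃ k, s k) := (isCompact_iUnion hcomp).isClosed
  have := (isPreconnected_iff_subset_of_fully_disjoint_closed hUclosed).1 hconn
    A B hAclosed hBclosed hcover hdisj
  rcases this with h | h
  · obtain ⟨x, hx⟩ := hne j
    have : x ∈ A := h (mem_iUnion.2 ⟨j, hx⟩)
    obtain ⟨k, hkT, hxk⟩ := by simpa only [hA, mem_iUnion] using this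
    exact hkT.tail ⟨x, hxk, hx⟩
  · obtain ⟨x, hx⟩ := hne i
    have hxB : x ∈ B := h (mem_iUnion.2 ⟨i, hx⟩)
    obtain ⟨k, hkT, hxk⟩ := by simpa only [hB, mem_iUnion] using hxB
    exact absurd (Relation.ReflTransGen.refl.tail ⟨x, hx, hxk⟩) hkT

/-- The image of a preconnected set under a non-injective affine self-map of the
plane is convex. -/
private lemma aux_noninj_convex (T : E2' →ᵃ[ℝ] E2') (hninj : ¬Function.Injective ⇑T)
    {A : Set E2'} (hA : A.Nonempty) (hconn : IsPreconnected A) :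
    Convex ℝ (T '' A) := by
  have hlin : ¬Function.Injective T.linear := fun h => hninj (T.linear_injective_iff.1 h)
  have hdecomp : ∀ x, T x = T.linear x + T 0 := by
    intro x
    conv_lhs => rw [T.decomp]
    simp
  by_cases hzero : T.linear = 0
  · have himg : T '' A = {T 0} := by
      apply Subset.antisymm
      · rintro y ⟨x, _, rfl⟩
        simp [hdecomp x, hzero]
      · rintro y rfl
        obtain ⟨a, ha⟩ := hA
        exact ⟨a, ha, by simp [hdecomp a, hzero]⟩
    rw [himg]; exact convex_singleton _
  · obtain ⟨x₀, hx₀⟩ : ∃ x, T.linear x ≠ 0 := by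
      by_contra h
      push_neg at h
      exact hzero (LinearMap.ext fun x => h x)
    set u := T.linear x₀ with hu
    have hune : u ≠ 0 := hx₀
    have hker : LinearMap.ker T.linear ≠ ⊥ := by
      rwa [Ne, LinearMap.ker_eq_bot]
    have hrange : LinearMap.range T.linear = Submodule.span ℝ {u} := by
      have hle : Submodule.span ℝ {u} ≤ LinearMap.range T.linear := by
        rw [Submodule.span_singleton_le_iff_mem]
        exact ⟨x₀, rfl⟩
      have h1 : Module.finrank ℝ (Submodule.span ℝ ({u} : Set E2')) = 1 :=
        finrank_span_singleton hune
      have h2 : Module.finrank ℝ (LinearMap.range T.linear)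
          + Module.finrank ℝ (LinearMap.ker T.linear) = 2 := by
        rw [LinearMap.finrank_range_add_finrank_ker]
        simp [finrank_euclideanSpace_fin]
      have h3 : Module.finrank ℝ (LinearMap.ker T.linear) ≠ 0 := by
        rw [Ne, Submodule.finrank_eq_zero]
        exact hker
      exact (Submodule.eq_of_le_of_finrank_le hle (by omega)).symm
    set φ : E2' →ₗ[ℝ] ℝ :=
      ((‖u‖ ^ 2)⁻¹ • ((innerSL ℝ u : E2' →L[ℝ] ℝ) : E2' →ₗ[ℝ] ℝ)).comp T.linear with hφ
    set g : ℝ →ᵃ[ℝ] E2' := AffineMap.lineMap (T 0) (u + T 0) with hg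
    have hgapp : ∀ t : ℝ, g t = t • u + T 0 := by
      intro t
      simp [hg, AffineMap.lineMap_apply]
    have hTgφ : ∀ x, T x = g (φ x) := by
      intro x
      obtain ⟨c, hc⟩ : ∃ c : ℝ, T.linear x = c • u := by
        have : T.linear x ∈ LinearMap.range T.linear := ⟨x, rfl⟩
        rw [hrange, Submodule.mem_span_singleton] at this
        obtain ⟨c, hc⟩ := this
        exact ⟨c, hc.symm⟩
      have hφx : φ x = c := by
        have h6 : (inner ℝ u (T.linear x) : ℝ) = c * ‖u‖ ^ 2 := by
          rw [hc, real_inner_smul_right, real_inner_self_eq_norm_sq]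
        have h7 : φ x = (‖u‖ ^ 2)⁻¹ * (inner ℝ u (T.linear x) : ℝ) := rfl
        have h8 : (‖u‖ : ℝ) ^ 2 ≠ 0 := pow_ne_zero 2 (norm_ne_zero_iff.2 hune)
        rw [h7, h6]
        field_simp
      rw [hgapp, hφx, hdecomp x, hc]
    have himg : T '' A = g '' (φ '' A) := by
      rw [image_image]
      exact image_congr fun x _ => hTgφ x
    rw [himg]
    have hφcont : Continuous φ := φ.continuous_of_finiteDimensional
    have hD : IsPreconnected (φ '' A) := hconn.image φ hφcont.continuousOn
    have hDconv : Convex ℝ (φ '' A) := hD.ordConnected.convex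
    exact hDconv.affine_image g

end AuxPolygonal

/-- Composition `S i₁ ∘ S i₂ ∘ ⋯ ∘ S iₙ` along a multiindex given as a list. -/
def compList {m : ℕ} {E : Type*} (S : Fin m → E → E) : List (Fin m) → E → E
  | [] => id
  | i :: l => S i ∘ compList S l

/-- Affine-map version of `compList`. -/
noncomputable def compAff {m : ℕ} (S : Fin m → (EuclideanSpace ℝ (Fin 2)) →ᵃ[ℝ] (EuclideanSpace ℝ (Fin 2))) :
    List (Fin m) → (EuclideanSpace ℝ (Fin 2)) →ᵃ[ℝ] (EuclideanSpace ℝ (Fin 2))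
  | [] => AffineMap.id ℝ _
  | i :: l => (S i).comp (compAff S l)

lemma compAff_nil_coe {m : ℕ}
    (S : Fin m → (EuclideanSpace ℝ (Fin 2)) →ᵃ[ℝ] (EuclideanSpace ℝ (Fin 2))) :
    ⇑(compAff S []) = id := rfl

lemma compAff_cons_coe {m : ℕ}
    (S : Fin m → (EuclideanSpace ℝ (Fin 2)) →ᵃ[ℝ] (EuclideanSpace ℝ (Fin 2)))
    (i : Fin m) (l : List (Fin m)) :
    ⇑(compAff S (i :: l)) = ⇑(S i) ∘ ⇑(compAff S l) := by
  show ⇑((S i).comp (compAff S l)) = _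
  rw [AffineMap.coe_comp]

lemma compAff_coe {m : ℕ}
    (S : Fin m → (EuclideanSpace ℝ (Fin 2)) →ᵃ[ℝ] (EuclideanSpace ℝ (Fin 2))) :
    ∀ l : List (Fin m), ⇑(compAff S l) = compList (fun i => ⇑(S i)) l
  | [] => rfl
  | i :: l => by
    rw [compAff_cons_coe, compAff_coe S l]
    rfl

/-- for multiindices `𝐢`, `𝐣` of a simply connected self-affine
polygonal system, `P_𝐢 ⊆ P_𝐣` if and only if `K_𝐢 ⊆ K_𝐣`. -/
theorem polygon_subset_iff_copy_subset {m : ℕ}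
    (F : Finset (EuclideanSpace ℝ (Fin 2)))
    (P V K : Set (EuclideanSpace ℝ (Fin 2)))
    (hP : P = convexHull ℝ (F : Set (EuclideanSpace ℝ (Fin 2))))
    (hPint : (interior P).Nonempty)
    (hV : V = Set.extremePoints ℝ P)
    (S : Fin m → (EuclideanSpace ℝ (Fin 2)) →ᵃ[ℝ] (EuclideanSpace ℝ (Fin 2)))
    (r : Fin m → NNReal) (hr : ∀ i, r i < 1)
    (hLip : ∀ i, LipschitzWith (r i) (S i))
    (h1 : ∀ i, (S i) '' P ⊆ P)
    (h2 : V ⊆ ⋃ i, (S i) '' V)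
    (h3 : ∀ i j, i ≠ j →
      ((S i) '' P) ∩ ((S j) '' P) = ((S i) '' V) ∩ ((S j) '' V) ∧
      (((S i) '' V) ∩ ((S j) '' V)).Subsingleton)
    (h4 : SimplyConnectedSpace ↥(⋃ i, (S i) '' P))
    (hKne : K.Nonempty) (hKcomp : IsCompact K)
    (hK : K = ⋃ i, (S i) '' K)
    (I J : List (Fin m)) :
    (compList (fun i => ⇑(S i)) I '' P ⊆ compList (fun i => ⇑(S i)) J '' P) ↔
      (compList (fun i => ⇑(S i)) I '' K ⊆ compList (fun i => ⇑(S i)) J '' K) := by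
  rw [← compAff_coe, ← compAff_coe]
  -- basic facts
  have hScont : ∀ i, Continuous ⇑(S i) := fun i => (hLip i).continuous
  have hPcomp : IsCompact P := hP ▸ F.finite_toSet.isCompact_convexHull ℝ
  have hPconv : Convex ℝ P := hP ▸ convex_convexHull ℝ _
  have hPne : P.Nonempty := hPint.mono interior_subset
  have hVP : V ⊆ P := hV ▸ extremePoints_subset
  have hSK : ∀ i, S i '' K ⊆ K := by
    intro i
    conv_rhs => rw [hK]
    exact subset_iUnion (fun i => S i '' K) i
  -- contraction ratio
  set c : NNReal := Finset.univ.sup r with hc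
  have hc1 : c < 1 := by
    apply Finset.sup_lt_iff (by norm_num : (⊥ : NNReal) < 1) |>.2
    exact fun i _ => hr i
  have hcle : ∀ i, r i ≤ c := fun i => Finset.le_sup (Finset.mem_univ i)
  have hLipc : ∀ i, LipschitzWith c ⇑(S i) := fun i => (hLip i).weaken (hcle i)
  have hc0 : (0 : ℝ) ≤ (c : ℝ) := c.coe_nonneg
  have hcR1 : (c : ℝ) < 1 := hc1
  -- uniform bound
  obtain ⟨k₀, hk₀⟩ := hKne
  obtain ⟨R₀, hR₀⟩ := (hPcomp.union hKcomp).isBounded.subset_closedBall k₀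
  set R : ℝ := R₀ + R₀ with hR
  have hR₀0 : 0 ≤ R₀ := by
    have := hR₀ (Or.inr hk₀)
    simpa using this
  have hR0 : 0 ≤ R := by positivity
  have hbound : ∀ x ∈ P ∪ K, ∀ y ∈ P ∪ K, dist x y ≤ R := by
    intro x hx y hy
    calc dist x y ≤ dist x k₀ + dist y k₀ := dist_triangle_right _ _ _
    _ ≤ R₀ + R₀ := add_le_add (hR₀ hx) (hR₀ hy)
  -- geometric decay helper
  have hclosure : ∀ (C : Set (EuclideanSpace ℝ (Fin 2))), IsClosed C →
      ∀ x, (∀ n : ℕ, ∃ y ∈ C, dist x y ≤ (c : ℝ) ^ n * R) → x ∈ C := by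
    intro C hCcl x hx
    have hx' : ∀ ε > 0, ∃ y ∈ C, dist x y < ε := by
      intro ε hε
      have htend : Filter.Tendsto (fun n : ℕ => (c : ℝ) ^ n * R) Filter.atTop (nhds 0) := by
        simpa using (tendsto_pow_atTop_nhds_zero_of_lt_one hc0 hcR1).mul_const R
      obtain ⟨n, hn⟩ := (htend.eventually (eventually_lt_nhds hε)).exists
      obtain ⟨y, hy, hxy⟩ := hx n
      exact ⟨y, hy, lt_of_le_of_lt hxy hn⟩
    rw [← hCcl.closure_eq]
    rw [Metric.mem_closure_iff]
    intro ε hε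
    obtain ⟨y, hy, hxy⟩ := hx' ε hε
    exact ⟨y, hy, hxy⟩
  -- K ⊆ P
  have hKapprox : ∀ n : ℕ, ∀ x ∈ K, ∃ p ∈ P, dist x p ≤ (c : ℝ) ^ n * R := by
    intro n
    induction n with
    | zero =>
      intro x hx
      obtain ⟨p₀, hp₀⟩ := hPne
      exact ⟨p₀, hp₀, by simpa using hbound x (Or.inr hx) p₀ (Or.inl hp₀)⟩
    | succ n ih =>
      intro x hx
      rw [hK, mem_iUnion] at hx
      obtain ⟨i, y, hy, rfl⟩ := hx
      obtain ⟨p, hp, hyp⟩ := ih y hy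
      refine ⟨S i p, h1 i (mem_image_of_mem _ hp), ?_⟩
      calc dist (S i y) (S i p) ≤ (c : ℝ) * dist y p := (hLipc i).dist_le_mul y p
      _ ≤ (c : ℝ) * ((c : ℝ) ^ n * R) := by
        exact mul_le_mul_of_nonneg_left hyp hc0
      _ = (c : ℝ) ^ (n + 1) * R := by ring
  have hKP : K ⊆ P := fun x hx =>
    hclosure P hPcomp.isClosed x fun n => hKapprox n x hx
  -- V ⊆ K
  have hVapprox : ∀ n : ℕ, ∀ v ∈ V, ∃ y ∈ K, dist v y ≤ (c : ℝ) ^ n * R := by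
    intro n
    induction n with
    | zero =>
      intro v hv
      exact ⟨k₀, hk₀, by simpa using hbound v (Or.inl (hVP hv)) k₀ (Or.inr hk₀)⟩
    | succ n ih =>
      intro v hv
      obtain ⟨i, w, hw, rfl⟩ := by
        have := h2 hv
        rw [mem_iUnion] at this
        exact this
      obtain ⟨y, hy, hwy⟩ := ih w hw
      refine ⟨S i y, hSK i (mem_image_of_mem _ hy), ?_⟩
      calc dist (S i w) (S i y) ≤ (c : ℝ) * dist w y := (hLipc i).dist_le_mul w y
      _ ≤ (c : ℝ) * ((c : ℝ) ^ n * R) := mul_le_mul_of_nonneg_left hwy hc0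
      _ = (c : ℝ) ^ (n + 1) * R := by ring
  have hVK : V ⊆ K := fun v hv =>
    hclosure K hKcomp.isClosed v fun n => hVapprox n v hv
  -- P is the closed convex hull of K
  have hPhull : P ⊆ closure (convexHull ℝ K) := by
    have hKM : closure (convexHull ℝ (Set.extremePoints ℝ P)) = P :=
      closure_convexHull_extremePoints hPcomp hPconv
    calc P = closure (convexHull ℝ (Set.extremePoints ℝ P)) := hKM.symm
    _ ⊆ closure (convexHull ℝ K) := by
      apply closure_mono
      apply convexHull_mono
      rw [← hV]
      exact hVK
  -- compAff facts
  have hccont : ∀ w : List (Fin m), Continuous ⇑(compAff S w) := by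
    intro w
    induction w with
    | nil => exact continuous_id
    | cons i l ih =>
      rw [compAff_cons_coe]
      exact (hScont i).comp ih
  have hcApp : ∀ (i : Fin m) (l : List (Fin m)) (A : Set (EuclideanSpace ℝ (Fin 2))),
      compAff S (i :: l) '' A = S i '' (compAff S l '' A) := by
    intro i l A
    rw [compAff_cons_coe, image_comp]
  have hwP : ∀ w : List (Fin m), compAff S w '' P ⊆ P := by
    intro w
    induction w with
    | nil => rw [compAff_nil_coe, image_id]
    | cons i l ih =>
      rw [hcApp]
      exact (image_mono ih).trans (h1 i)
  have hwK : ∀ w : List (Fin m), compAff S w '' K ⊆ K := by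
    intro w
    induction w with
    | nil => rw [compAff_nil_coe, image_id]
    | cons i l ih =>
      rw [hcApp]
      exact (image_mono ih).trans (hSK i)
  have hwKcomp : ∀ w : List (Fin m), IsCompact (compAff S w '' K) :=
    fun w => hKcomp.image (hccont w)
  have hwKne : ∀ w : List (Fin m), (compAff S w '' K).Nonempty :=
    fun w => ⟨compAff S w k₀, mem_image_of_mem _ hk₀⟩
  -- polygon pieces vs hulls of fractal pieces
  have hPcl : ∀ w : List (Fin m),
      compAff S w '' P ⊆ closure (convexHull ℝ (compAff S w '' K)) := by
    intro w
    calc compAff S w '' P ⊆ compAff S w '' closure (convexHull ℝ K) :=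
      image_mono hPhull
    _ ⊆ closure (compAff S w '' convexHull ℝ K) :=
      image_closure_subset_closure_image (hccont w)
    _ = closure (convexHull ℝ (compAff S w '' K)) := by
      rw [AffineMap.image_convexHull]
  have hclP : ∀ w : List (Fin m),
      closure (convexHull ℝ (compAff S w '' K)) ⊆ compAff S w '' P := by
    intro w
    have h5 : convexHull ℝ (compAff S w '' K) ⊆ compAff S w '' P :=
      convexHull_min (image_mono hKP) (hPconv.affine_image _)
    have h6 : IsClosed (compAff S w '' P) := (hPcomp.image (hccont w)).isClosed
    exact h6.closure_subset_iff.2 h5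
  -- connectedness of K
  set U : ℕ → Set (EuclideanSpace ℝ (Fin 2)) :=
    fun n => Nat.rec P (fun _ Un => ⋃ i, S i '' Un) n with hU
  have hU0 : U 0 = P := rfl
  have hUsucc : ∀ n, U (n + 1) = ⋃ i, S i '' U n := fun n => rfl
  have hUcomp : ∀ n, IsCompact (U n) := by
    intro n
    induction n with
    | zero => exact hPcomp
    | succ n ih =>
      rw [hUsucc]
      exact isCompact_iUnion fun i => ih.image (hScont i)
  have hUK : ∀ n, K ⊆ U n := by
    intro n
    induction n with
    | zero => exact hKP
    | succ n ih =>
      rw [hUsucc]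
      conv_lhs => rw [hK]
      exact iUnion_mono fun i => image_mono ih
  have hUne : ∀ n, (U n).Nonempty := fun n => ⟨k₀, hUK n hk₀⟩
  have hUdec : ∀ n, U (n + 1) ⊆ U n := by
    intro n
    induction n with
    | zero => exact iUnion_subset h1
    | succ n ih => exact iUnion_mono fun i => image_mono ih
  have hU1conn : IsPreconnected (⋃ i, S i '' P) := by
    haveI := h4
    haveI : ConnectedSpace ↥(⋃ i, (S i) '' P) := inferInstance
    exact (isConnected_iff_connectedSpace.2 this).isPreconnected
  have hrtgP : ∀ i j : Fin m,
      Relation.ReflTransGen (fun a b => ((S a '' P) ∩ (S b '' P)).Nonempty) i j := by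
    intro i j
    exact aux_rtg (fun i => hPcomp.image (hScont i)) (fun i => hPne.image _) hU1conn i j
  have hrel : ∀ n, ∀ i j : Fin m, ((S i '' P) ∩ (S j '' P)).Nonempty →
      ((S i '' U n) ∩ (S j '' U n)).Nonempty := by
    intro n i j hij
    by_cases h : i = j
    · subst h
      exact ((hUne n).image (S i)).mono (subset_inter Subset.rfl Subset.rfl)
    · obtain ⟨x, hx⟩ := hij
      rw [(h3 i j h).1] at hx
      obtain ⟨⟨a, ha, hax⟩, ⟨b, hb, hbx⟩⟩ := hx
      refine ⟨x, ⟨a, hUK n (hVK ha), hax⟩, ⟨b, hUK n (hVK hb), hbx⟩⟩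
  have hUconn : ∀ n, IsPreconnected (U n) := by
    intro n
    induction n with
    | zero => exact hPconv.isPreconnected
    | succ n ih =>
      rw [hUsucc]
      apply IsPreconnected.iUnion_of_reflTransGen
        (fun i => ih.image _ (hScont i).continuousOn)
      intro i j
      exact Relation.ReflTransGen.mono (fun a b hab => hrel n a b hab) _ _ (hrtgP i j)
  have hKiInter : K = ⋂ n, U n := by
    apply Subset.antisymm (subset_iInter hUK)
    intro x hx
    apply hclosure K hKcomp.isClosed x
    have happrox : ∀ n : ℕ, ∀ y ∈ U n, ∃ z ∈ K, dist y z ≤ (c : ℝ) ^ n * R := by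
      intro n
      induction n with
      | zero =>
        intro y hy
        exact ⟨k₀, hk₀, by simpa using hbound y (Or.inl hy) k₀ (Or.inr hk₀)⟩
      | succ n ih =>
        intro y hy
        rw [hUsucc, mem_iUnion] at hy
        obtain ⟨i, z, hz, rfl⟩ := hy
        obtain ⟨k, hkK, hzk⟩ := ih z hz
        refine ⟨S i k, hSK i (mem_image_of_mem _ hkK), ?_⟩
        calc dist (S i z) (S i k) ≤ (c : ℝ) * dist z k := (hLipc i).dist_le_mul z k
        _ ≤ (c : ℝ) * ((c : ℝ) ^ n * R) := mul_le_mul_of_nonneg_left hzk hc0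
        _ = (c : ℝ) ^ (n + 1) * R := by ring
    exact fun n => happrox n x (mem_iInter.1 hx n)
  have hKconn : IsPreconnected K := by
    rw [hKiInter]
    exact aux_iInter_preconn hUcomp hUdec hUconn
  -- THE KEY LEMMA: K ∩ P_w ⊆ K_w
  have hC : ∀ w : List (Fin m), K ∩ (compAff S w '' P) ⊆ compAff S w '' K := by
    intro w
    induction w with
    | nil =>
      rw [compAff_nil_coe, image_id, image_id]
      exact inter_subset_left
    | cons j v ih =>
      rw [hcApp, hcApp]
      by_cases hinj : Function.Injective ⇑(S j)
      · rintro x ⟨hxK, hxP⟩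
        obtain ⟨z, hz, hzx⟩ := hxP
        have hxK' := hxK
        rw [hK, mem_iUnion] at hxK'
        obtain ⟨i, y, hy, hyx⟩ := hxK'
        by_cases hij : i = j
        · subst hij
          have : y = z := hinj (hyx.trans hzx.symm)
          subst this
          exact hyx ▸ mem_image_of_mem _ (ih ⟨hy, hz⟩)
        · -- x is a common point of S i '' P and S j '' P
          have hxij : x ∈ (S i '' P) ∩ (S j '' P) :=
            ⟨⟨y, hKP hy, hyx⟩, ⟨z, hwP v hz, hzx⟩⟩
          rw [(h3 i j hij).1] at hxij
          obtain ⟨w', hw', hwx⟩ := hxij.2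
          have : w' = z := hinj (hwx.trans hzx.symm)
          subst this
          exact hzx ▸ mem_image_of_mem _ (ih ⟨hVK hw', hz⟩)
      · rintro x ⟨hxK, hxP⟩
        -- the non-injective case: S j '' (P_v) = S j '' (K_v)
        have hconnv : IsPreconnected (compAff S v '' K) :=
          hKconn.image _ (hccont v).continuousOn
        have hBconv : Convex ℝ (S j '' (compAff S v '' K)) :=
          aux_noninj_convex (S j) hinj (hwKne v) hconnv
        have hBcomp : IsCompact (S j '' (compAff S v '' K)) :=
          (hwKcomp v).image (hScont j)
        have hsub : S j '' (compAff S v '' P) ⊆ S j '' (compAff S v '' K) := by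
          calc S j '' (compAff S v '' P)
              ⊆ S j '' closure (convexHull ℝ (compAff S v '' K)) :=
            image_mono (hPcl v)
          _ ⊆ closure (S j '' convexHull ℝ (compAff S v '' K)) :=
            image_closure_subset_closure_image (hScont j)
          _ = closure (convexHull ℝ (S j '' (compAff S v '' K))) := by
            rw [AffineMap.image_convexHull]
          _ = closure (S j '' (compAff S v '' K)) := by
            rw [hBconv.convexHull_eq]
          _ = S j '' (compAff S v '' K) := hBcomp.isClosed.closure_eq
        exact hsub hxP
  -- conclusion
  constructor
  · intro h x hx
    have hxK : x ∈ K := hwK I hx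
    have hxP : x ∈ compAff S J '' P := h ((image_mono hKP) hx)
    exact hC J ⟨hxK, hxP⟩
  · intro h
    calc compAff S I '' P ⊆ closure (convexHull ℝ (compAff S I '' K)) := hPcl I
    _ ⊆ closure (convexHull ℝ (compAff S J '' K)) := closure_mono (convexHull_mono h)
    _ ⊆ compAff S J '' P := hclP J
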